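/- Let Λ and X be complete metric spaces and let S_λ(·,·), λ ∈ Λ, be a family of processes on X. Assume: (L1) each S_λ has a pullback attractor 𝒜_λ(·); (L2) there is a bounded subset D of X with 𝒜_λ(t) ⊆ D for every λ ∈ Λ and every t ∈ ℝ; (L3) for every s ∈ ℝ and t ≥ s the map λ ↦ S_λ(t,s)x is continuous, uniformly for x in bounded subsets of X; and moreover for every λ₀ ∈ Λ and every t ∈ ℝ there exists δ > 0 such that the closure of ⋃_{λ ∈ B_Λ(λ₀,δ)} 𝒜_λ(t) is compact. Then there exists a residual set Λ_* ⊆ Λ such that for every t ∈ ℝ the function λ ↦ 𝒜_λ(t), into the nonempty compact subsets of X with the Hausdorff metric, is continuous at each λ ∈ Λ_*. -/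

import Mathlib

open Filter Topology Metric Bornology

/-- A process on a metric space `X`: a two-parameter family `S t s : X → X` (`t ≥ s`)
with `S t t = id`, `S t τ ∘ S τ s = S t s` for `t ≥ τ ≥ s`, and `(t, s, x) ↦ S t s x`
continuous on the region `s ≤ t`. -/
def IsProcess {X : Type*} [MetricSpace X] (S : ℝ → ℝ → X → X) : Prop :=
  (∀ t : ℝ, S t t = id) ∧
  (∀ t τ s : ℝ, s ≤ τ → τ ≤ t → S t τ ∘ S τ s = S t s) ∧
  ContinuousOn (fun p : ℝ × ℝ × X => S p.1 p.2.1 p.2.2) {p : ℝ × ℝ × X | p.2.1 ≤ p.1}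

/-- The family `A(·)` is pullback attracting for the process `S`:
for every bounded `B` and every `t`, `ρ_X(S(t,s)B, A(t)) → 0` as `s → −∞`. -/
def PullbackAttracts {X : Type*} [MetricSpace X] (S : ℝ → ℝ → X → X) (A : ℝ → Set X) :
    Prop :=
  ∀ B : Set X, IsBounded B → ∀ t : ℝ, ∀ ε : ℝ, 0 < ε → ∃ s₀ : ℝ, ∀ s ≤ s₀, ∀ x ∈ B,
    EMetric.infEdist (S t s x) (A t) < ENNReal.ofReal ε

/-- A pullback attractor for the process `S`: a family of compact sets that is
invariant, pullback attracting, and minimal among such families. -/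
def IsPullbackAttractor {X : Type*} [MetricSpace X] (S : ℝ → ℝ → X → X)
    (A : ℝ → Set X) : Prop :=
  (∀ t : ℝ, IsCompact (A t)) ∧
  (∀ t s : ℝ, s ≤ t → S t s '' A s = A t) ∧
  PullbackAttracts S A ∧
  (∀ C : ℝ → Set X, (∀ t : ℝ, IsCompact (C t)) →
    (∀ t s : ℝ, s ≤ t → S t s '' C s = C t) → PullbackAttracts S C →
    ∀ t : ℝ, A t ⊆ C t)

/-- Residual continuity of pullback attractors under (L1), (L2), (L3) together with
local compactness of the union of nearby attractors. -/
theorem stmt8 {Λ X : Type*} [MetricSpace Λ] [CompleteSpace Λ]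
    [MetricSpace X] [CompleteSpace X]
    (S : Λ → ℝ → ℝ → X → X) (hproc : ∀ l : Λ, IsProcess (S l))
    -- (L1): pullback attractors
    (A : Λ → ℝ → Set X) (hA : ∀ l : Λ, IsPullbackAttractor (S l) (A l))
    -- (L2): a common bounded set containing all attractors
    (D : Set X) (hD : IsBounded D) (hAD : ∀ (l : Λ) (t : ℝ), A l t ⊆ D)
    -- (L3): continuity in `λ`, uniformly for `x` in bounded sets
    (hL3 : ∀ s t : ℝ, s ≤ t → ∀ B : Set X, IsBounded B → ∀ l₀ : Λ, ∀ ε : ℝ, 0 < ε →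
      ∃ δ : ℝ, 0 < δ ∧ ∀ l : Λ, dist l l₀ < δ → ∀ x ∈ B,
        dist (S l t s x) (S l₀ t s x) < ε)
    -- local compactness of the union of nearby attractors
    (hcpt : ∀ (l₀ : Λ) (t : ℝ), ∃ δ : ℝ, 0 < δ ∧
      IsCompact (closure (⋃ l ∈ Metric.ball l₀ δ, A l t))) :
    ∃ Λs ∈ residual Λ, ∀ l₀ ∈ Λs, ∀ t : ℝ, ∀ ε : ℝ, 0 < ε →
      ∃ δ : ℝ, 0 < δ ∧ ∀ l : Λ, dist l l₀ < δ →
        hausdorffDist (A l t) (A l₀ t) < ε := by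
  classical
  rcases isEmpty_or_nonempty X with hX | hX
  · refine ⟨Set.univ, Filter.univ_mem, fun l₀ _ t ε hε => ⟨1, one_pos, fun l _ => ?_⟩⟩
    have h1 : A l t = ∅ := Set.eq_empty_of_isEmpty _
    have h2 : A l₀ t = ∅ := Set.eq_empty_of_isEmpty _
    rw [h1, h2]
    simpa [Metric.hausdorffDist_empty] using hε
  obtain ⟨x₀⟩ := hX
  -- every section of every attractor is nonempty
  have hne : ∀ l t, (A l t).Nonempty := by
    intro l t
    by_contra h
    rw [Set.not_nonempty_iff_eq_empty] at h
    obtain ⟨s₀, hs₀⟩ := (hA l).2.2.1 {x₀} (Bornology.isBounded_singleton) t 1 one_pos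
    have h1 := hs₀ s₀ le_rfl x₀ (Set.mem_singleton _)
    rw [h, show EMetric.infEdist (S l t s₀ x₀) (∅ : Set X) = ⊤ from Metric.infEDist_empty] at h1
    exact not_top_lt h1
  have hfinIE : ∀ (x : X) (l : Λ) (t : ℝ), EMetric.infEdist x (A l t) ≠ ⊤ := by
    intro x l t
    obtain ⟨a₀, ha₀⟩ := hne l t
    exact ne_top_of_le_ne_top (edist_ne_top _ _) (EMetric.infEdist_le_edist_of_mem ha₀)
  have hfin : ∀ (l l' : Λ) (t : ℝ),
      EMetric.hausdorffEdist (A l t) (A l' t) ≠ ⊤ := fun l l' t =>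
    Metric.hausdorffEdist_ne_top_of_nonempty_of_bounded (hne l t) (hne l' t)
      (hD.subset (hAD l t)) (hD.subset (hAD l' t))
  -- upper semicontinuity everywhere
  have husc : ∀ (t : ℝ) (l₀ : Λ) (ε : ℝ), 0 < ε → ∃ δ > 0, ∀ l, dist l l₀ < δ →
      ∀ a ∈ A l t, EMetric.infEdist a (A l₀ t) < ENNReal.ofReal ε := by
    intro t l₀ ε hε
    obtain ⟨s₀, hs₀⟩ := (hA l₀).2.2.1 D hD t (ε/2) (by linarith)
    obtain ⟨δ, hδ, hδ'⟩ := hL3 (min s₀ t) t (min_le_right _ _) D hD l₀ (ε/2) (by linarith)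
    refine ⟨δ, hδ, fun l hl a ha => ?_⟩
    rw [← (hA l).2.1 t (min s₀ t) (min_le_right _ _)] at ha
    obtain ⟨x, hx, rfl⟩ := ha
    have hxD : x ∈ D := hAD l (min s₀ t) hx
    have h1 : dist (S l t (min s₀ t) x) (S l₀ t (min s₀ t) x) < ε/2 := hδ' l hl x hxD
    have h2 : EMetric.infEdist (S l₀ t (min s₀ t) x) (A l₀ t) < ENNReal.ofReal (ε/2) :=
      hs₀ (min s₀ t) (min_le_left _ _) x hxD
    calc EMetric.infEdist (S l t (min s₀ t) x) (A l₀ t)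
        ≤ edist (S l t (min s₀ t) x) (S l₀ t (min s₀ t) x)
            + EMetric.infEdist (S l₀ t (min s₀ t) x) (A l₀ t) :=
          EMetric.infEdist_le_edist_add_infEdist
      _ < ENNReal.ofReal (ε/2) + ENNReal.ofReal (ε/2) := by
          refine ENNReal.add_lt_add ?_ h2
          rw [edist_dist]
          exact (ENNReal.ofReal_lt_ofReal_iff (by linarith)).2 h1
      _ = ENNReal.ofReal ε := by
          rw [← ENNReal.ofReal_add (by linarith) (by linarith)]
          norm_num
  -- the sets of `ε`-failure of lower semicontinuity are nowhere dense
  have hFort : ∀ (t ε : ℝ), 0 < ε → IsNowhereDense {l₀ : Λ | ∀ δ > 0, ∃ l, dist l l₀ < δ ∧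
      ∃ a ∈ A l₀ t, ENNReal.ofReal ε ≤ EMetric.infEdist a (A l t)} := by
    intro t ε hε
    set E : Set Λ := {l₀ : Λ | ∀ δ > 0, ∃ l, dist l l₀ < δ ∧
      ∃ a ∈ A l₀ t, ENNReal.ofReal ε ≤ EMetric.infEdist a (A l t)} with hEdef
    rw [IsNowhereDense, Set.eq_empty_iff_forall_notMem]
    intro μ hμ
    obtain ⟨r, hr, hball⟩ := Metric.isOpen_iff.1 isOpen_interior μ hμ
    obtain ⟨δc, hδc, hKc⟩ := hcpt μ t
    set r' := min r δc with hr'def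
    have hr' : 0 < r' := lt_min hr hδc
    set U := Metric.ball μ r' with hUdef
    set K := closure (⋃ l ∈ Metric.ball μ δc, A l t) with hKdef
    have hUK : ∀ l ∈ U, A l t ⊆ K := by
      intro l hl
      refine subset_trans ?_ subset_closure
      exact Set.subset_biUnion_of_mem (u := fun l => A l t)
        (Metric.mem_ball.2 (lt_of_lt_of_le (Metric.mem_ball.1 hl) (min_le_right _ _)))
    have hUE : U ⊆ closure E := fun l hl =>
      interior_subset (hball (Metric.mem_ball.2 (lt_of_lt_of_le (Metric.mem_ball.1 hl) (min_le_left _ _))))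
    have hdense : ∀ l ∈ U, ∀ η > 0, ∃ l', l' ∈ E ∧ l' ∈ U ∧ dist l' l < η := by
      intro l hl η hη
      have hlμ : dist l μ < r' := Metric.mem_ball.1 hl
      have hη' : 0 < min η (r' - dist l μ) := lt_min hη (by linarith)
      obtain ⟨l', hl'E, hl'd⟩ := Metric.mem_closure_iff.1 (hUE hl) _ hη'
      rw [dist_comm] at hl'd
      refine ⟨l', hl'E, ?_, lt_of_lt_of_le hl'd (min_le_left _ _)⟩
      have : dist l' l < r' - dist l μ := lt_of_lt_of_le hl'd (min_le_right _ _)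
      exact Metric.mem_ball.2 (lt_of_le_of_lt (dist_triangle l' l μ) (by linarith))
    -- inductive construction of separated points
    have key : ∀ k : ℕ, ∃ (l : Λ) (f : Fin k → X), l ∈ U ∧ l ∈ E ∧ (∀ i, f i ∈ K) ∧
        (∀ i j, i ≠ j → ε/2 < dist (f i) (f j)) ∧
        (∀ i, ENNReal.ofReal (ε/2) < EMetric.infEdist (f i) (A l t)) := by
      intro k
      induction k with
      | zero =>
        obtain ⟨l, hlE, hlU, -⟩ := hdense μ (Metric.mem_ball_self hr') 1 one_pos
        exact ⟨l, Fin.elim0, hlU, hlE, fun i => i.elim0, fun i => i.elim0, fun i => i.elim0⟩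
      | succ k ih =>
        obtain ⟨l, f, hlU, hlE, hfK, hsep, hfar⟩ := ih
        -- choose a margin η
        obtain ⟨η, hη0, hη8, hηc⟩ : ∃ η : ℝ, 0 < η ∧ η ≤ ε/8 ∧
            ∀ i : Fin k, ε/2 + 2*η ≤ (EMetric.infEdist (f i) (A l t)).toReal := by
          have hc : ∀ i : Fin k, ε/2 < (EMetric.infEdist (f i) (A l t)).toReal := by
            intro i
            have := (ENNReal.toReal_lt_toReal ENNReal.ofReal_ne_top (hfinIE (f i) l t)).2 (hfar i)
            rwa [ENNReal.toReal_ofReal (by linarith)] at this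
          rcases isEmpty_or_nonempty (Fin k) with hk | hk
          · exact ⟨ε/8, by linarith, le_rfl, fun i => isEmptyElim i⟩
          · obtain ⟨i₀, -, hi₀⟩ := Finset.exists_min_image Finset.univ
              (fun i => (EMetric.infEdist (f i) (A l t)).toReal) ⟨hk.some, Finset.mem_univ _⟩
            refine ⟨min (ε/8) (((EMetric.infEdist (f i₀) (A l t)).toReal - ε/2)/4), ?_,
              min_le_left _ _, fun i => ?_⟩
            · exact lt_min (by linarith) (by have := hc i₀; linarith)
            · have h1 := hi₀ i (Finset.mem_univ i)
              have h3 := hc i₀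
              have h2 : min (ε/8) (((EMetric.infEdist (f i₀) (A l t)).toReal - ε/2)/4)
                  ≤ ((EMetric.infEdist (f i₀) (A l t)).toReal - ε/2)/4 := min_le_right _ _
              linarith
        have hfar2 : ∀ i : Fin k,
            ENNReal.ofReal (ε/2 + η + η) ≤ EMetric.infEdist (f i) (A l t) := by
          intro i
          rw [show ε/2 + η + η = ε/2 + 2*η by ring]
          calc ENNReal.ofReal (ε/2 + 2*η)
              ≤ ENNReal.ofReal ((EMetric.infEdist (f i) (A l t)).toReal) :=
                ENNReal.ofReal_le_ofReal (hηc i)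
            _ = EMetric.infEdist (f i) (A l t) := ENNReal.ofReal_toReal (hfinIE (f i) l t)
        -- pick a nearby parameter violating lsc by ε
        obtain ⟨δu, hδu, hδu'⟩ := husc t l η hη0
        have hlμ : dist l μ < r' := Metric.mem_ball.1 hlU
        have hpos : 0 < min δu (r' - dist l μ) := lt_min hδu (by linarith)
        obtain ⟨l₁, hl₁d, a, haA, haf⟩ := hlE _ hpos
        have hl₁U : l₁ ∈ U := by
          have : dist l₁ l < r' - dist l μ := lt_of_lt_of_le hl₁d (min_le_right _ _)
          exact Metric.mem_ball.2 (lt_of_le_of_lt (dist_triangle l₁ l μ) (by linarith))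
        have haK : a ∈ K := hUK l hlU haA
        have hsepa : ∀ i, ε/2 < dist (f i) a := by
          intro i
          have h2 : ENNReal.ofReal (ε/2) < edist (f i) a :=
            lt_of_lt_of_le (hfar i) (EMetric.infEdist_le_edist_of_mem haA)
          rwa [edist_dist, ENNReal.ofReal_lt_ofReal_iff_of_nonneg (by linarith)] at h2
        -- transfer the lower bounds to `l₁`
        have step1 : ∀ c : ℝ, 0 ≤ c → ∀ x : X,
            ENNReal.ofReal (c + η) ≤ EMetric.infEdist x (A l t) →
            ENNReal.ofReal c ≤ EMetric.infEdist x (A l₁ t) := by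
          intro c hc x hx
          refine Metric.le_infEDist.2 ?_
          intro b hb
          have hub := hδu' l₁ (lt_of_lt_of_le hl₁d (min_le_left _ _)) b hb
          have h3 : ENNReal.ofReal (c + η) ≤ edist x b + ENNReal.ofReal η :=
            le_trans hx (le_trans EMetric.infEdist_le_edist_add_infEdist
              (add_le_add_right hub.le _))
          rw [ENNReal.ofReal_add hc (by linarith)] at h3
          exact (ENNReal.add_le_add_iff_right ENNReal.ofReal_ne_top).1 h3
        have hb1 : ∀ i : Fin k,
            ENNReal.ofReal (ε/2 + η) ≤ EMetric.infEdist (f i) (A l₁ t) :=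
          fun i => step1 (ε/2 + η) (by linarith) (f i) (hfar2 i)
        -- move to a nearby element of `E`
        obtain ⟨δv, hδv, hδv'⟩ := husc t l₁ (η/2) (by linarith)
        obtain ⟨l₂, hl₂E, hl₂U, hl₂d⟩ := hdense l₁ hl₁U δv hδv
        have step2 : ∀ c : ℝ, 0 ≤ c → ∀ x : X,
            ENNReal.ofReal (c + η/2) ≤ EMetric.infEdist x (A l₁ t) →
            ENNReal.ofReal c ≤ EMetric.infEdist x (A l₂ t) := by
          intro c hc x hx
          refine Metric.le_infEDist.2 ?_
          intro b hb
          have hub := hδv' l₂ hl₂d b hb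
          have h3 : ENNReal.ofReal (c + η/2) ≤ edist x b + ENNReal.ofReal (η/2) :=
            le_trans hx (le_trans EMetric.infEdist_le_edist_add_infEdist
              (add_le_add_right hub.le _))
          rw [ENNReal.ofReal_add hc (by linarith)] at h3
          exact (ENNReal.add_le_add_iff_right ENNReal.ofReal_ne_top).1 h3
        have hb2 : ∀ i : Fin k,
            ENNReal.ofReal (ε/2 + η/4) ≤ EMetric.infEdist (f i) (A l₂ t) := by
          intro i
          refine step2 (ε/2 + η/4) (by linarith) (f i)
            (le_trans (ENNReal.ofReal_le_ofReal (by linarith)) (hb1 i))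
        have hb2a : ENNReal.ofReal (ε/2 + η/4) ≤ EMetric.infEdist a (A l₂ t) := by
          refine step2 (ε/2 + η/4) (by linarith) a
            (le_trans (ENNReal.ofReal_le_ofReal (by linarith)) haf)
        refine ⟨l₂, Fin.cons a f, hl₂U, hl₂E, ?_, ?_, ?_⟩
        · intro i
          induction i using Fin.cases with
          | zero => simpa using haK
          | succ i => simpa using hfK i
        · intro i j hij
          induction i using Fin.cases with
          | zero =>
            induction j using Fin.cases with
            | zero => exact absurd rfl hij
            | succ j => simpa [dist_comm] using hsepa j
          | succ i =>
            induction j using Fin.cases with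
            | zero => simpa using hsepa i
            | succ j =>
              simpa using hsep i j (fun h => hij (congrArg Fin.succ h))
        · intro i
          induction i using Fin.cases with
          | zero =>
            refine lt_of_lt_of_le ?_ (by simpa using hb2a)
            exact (ENNReal.ofReal_lt_ofReal_iff (by linarith)).2 (by linarith)
          | succ i =>
            refine lt_of_lt_of_le ?_ (by simpa using hb2 i)
            exact (ENNReal.ofReal_lt_ofReal_iff (by linarith)).2 (by linarith)
    -- contradiction with total boundedness
    obtain ⟨T, hTsub, hTfin, hTcov⟩ := finite_cover_balls_of_compact hKc
      (show (0:ℝ) < ε/4 by linarith)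
    haveI := hTfin.fintype
    obtain ⟨l, f, -, -, hfK, hsep, -⟩ := key (Fintype.card T + 1)
    have hchoice : ∀ i : Fin (Fintype.card T + 1), ∃ y : T, f i ∈ Metric.ball (y : X) (ε/4) := by
      intro i
      have h := hTcov (hfK i)
      rw [Set.mem_iUnion₂] at h
      obtain ⟨y, hy, h⟩ := h
      exact ⟨⟨y, hy⟩, h⟩
    choose g hg using hchoice
    obtain ⟨i, j, hij, hgij⟩ := Fintype.exists_ne_map_eq_of_card_lt g
      (by simp [Fintype.card_fin])
    have h1 := Metric.mem_ball.1 (hg i)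
    have h2 := Metric.mem_ball.1 (hg j)
    rw [hgij] at h1
    have hlt : dist (f i) (f j) < ε/2 := by
      calc dist (f i) (f j) ≤ dist (f i) (g j : X) + dist (g j : X) (f j) := dist_triangle _ _ _
        _ < ε/4 + ε/4 := by rw [dist_comm (g j : X) (f j)]; exact add_lt_add h1 h2
        _ = ε/2 := by ring
    exact absurd hlt (not_lt.2 (hsep i j hij).le)
  -- the residual set
  have hεn : ∀ n : ℕ, (0:ℝ) < 1/(n+1) := fun n => by positivity
  set Eset : ℚ × ℕ → Set Λ := fun p => {l₀ : Λ | ∀ δ > 0, ∃ l, dist l l₀ < δ ∧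
      ∃ a ∈ A l₀ (p.1 : ℝ), ENNReal.ofReal (1/(p.2+1)) ≤ EMetric.infEdist a (A l (p.1 : ℝ))}
    with hEsetdef
  have hmeag : IsMeagre (⋃ p : ℚ × ℕ, Eset p) := by
    rw [isMeagre_iff_countable_union_isNowhereDense]
    refine ⟨Set.range Eset, ?_, Set.countable_range _, ?_⟩
    · rintro s ⟨p, rfl⟩
      exact hFort (p.1 : ℝ) (1/(p.2+1)) (hεn p.2)
    · rw [Set.sUnion_range]
  refine ⟨(⋃ p : ℚ × ℕ, Eset p)ᶜ, hmeag, ?_⟩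
  intro l₀ hl₀ t ε hε
  -- continuity at rational times
  have hcontq : ∀ (q : ℚ) (ε' : ℝ), 0 < ε' → ∃ δ > 0, ∀ l, dist l l₀ < δ →
      hausdorffDist (A l (q:ℝ)) (A l₀ (q:ℝ)) < ε' := by
    intro q ε' hε'
    obtain ⟨n, hn⟩ := exists_nat_gt (2/ε')
    have hnE : l₀ ∉ Eset (q, n) := fun h => hl₀ (Set.mem_iUnion.2 ⟨(q, n), h⟩)
    rw [hEsetdef, Set.mem_setOf_eq] at hnE
    push_neg at hnE
    obtain ⟨δ₁, hδ₁, h1⟩ := hnE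
    obtain ⟨δ₂, hδ₂, h2⟩ := husc (q:ℝ) l₀ (ε'/2) (by linarith)
    refine ⟨min δ₁ δ₂, lt_min hδ₁ hδ₂, fun l hl => ?_⟩
    have hhalf : (1:ℝ)/((n:ℕ)+1) ≤ ε'/2 := by
      have hn1 : (0:ℝ) < (n:ℝ) + 1 := by positivity
      rw [div_le_div_iff₀ hn1 (by linarith)]
      have h2' : 2 < (n:ℝ) * ε' := (div_lt_iff₀ hε').1 hn
      nlinarith
    have hE1 : EMetric.hausdorffEdist (A l (q:ℝ)) (A l₀ (q:ℝ)) ≤ ENNReal.ofReal (ε'/2) := by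
      apply EMetric.hausdorffEdist_le_of_infEdist
      · intro x hx
        exact (h2 l (lt_of_lt_of_le hl (min_le_right _ _)) x hx).le
      · intro y hy
        have h3 := h1 l (lt_of_lt_of_le hl (min_le_left _ _)) y hy
        exact le_trans h3.le (ENNReal.ofReal_le_ofReal (by exact_mod_cast hhalf))
    have h4 : hausdorffDist (A l (q:ℝ)) (A l₀ (q:ℝ)) ≤ (ENNReal.ofReal (ε'/2)).toReal :=
      ENNReal.toReal_mono ENNReal.ofReal_ne_top hE1
    rw [ENNReal.toReal_ofReal (by linarith)] at h4
    linarith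
  -- transfer continuity from a rational time `q < t` to `t`
  obtain ⟨q, hq⟩ := exists_rat_lt t
  have hqt : (q:ℝ) ≤ t := hq.le
  obtain ⟨δ₁, hδ₁, h₁⟩ := hL3 (q:ℝ) t hqt D hD l₀ (ε/3) (by linarith)
  obtain ⟨δ₂, hδ₂, hKc⟩ := hcpt l₀ (q:ℝ)
  set K := closure (⋃ l ∈ Metric.ball l₀ δ₂, A l (q:ℝ)) with hKdef
  have hKl : ∀ l, dist l l₀ < δ₂ → A l (q:ℝ) ⊆ K := fun l hl =>
    (Set.subset_biUnion_of_mem (u := fun l => A l (q:ℝ)) (Metric.mem_ball.2 hl)).trans subset_closure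
  have hcont : Continuous (fun x => S l₀ t (q:ℝ) x) := by
    rw [continuous_iff_continuousAt]
    intro x
    have hopen : IsOpen {p : ℝ × ℝ × X | p.2.1 < p.1} := by
      exact isOpen_lt (by fun_prop) (by fun_prop)
    have hmem : {p : ℝ × ℝ × X | p.2.1 ≤ p.1} ∈ nhds ((t, ((q:ℝ), x)) : ℝ × ℝ × X) :=
      Filter.mem_of_superset (hopen.mem_nhds (by exact hq)) (fun p hp => show p.2.1 ≤ p.1 from le_of_lt hp)
    have hC : ContinuousAt (fun p : ℝ × ℝ × X => S l₀ p.1 p.2.1 p.2.2)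
        ((t, ((q:ℝ), x)) : ℝ × ℝ × X) := (hproc l₀).2.2.continuousAt hmem
    have hg : ContinuousAt (fun x : X => ((t, ((q:ℝ), x)) : ℝ × ℝ × X)) x := by fun_prop
    show ContinuousAt ((fun p : ℝ × ℝ × X => S l₀ p.1 p.2.1 p.2.2) ∘
      (fun x : X => ((t, ((q:ℝ), x)) : ℝ × ℝ × X))) x
    exact ContinuousAt.comp (f := fun x : X => ((t, ((q:ℝ), x)) : ℝ × ℝ × X)) hC hg
  have huc := hKc.uniformContinuousOn_of_continuous hcont.continuousOn
  rw [Metric.uniformContinuousOn_iff] at huc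
  obtain ⟨δ₃, hδ₃, h₃⟩ := huc (ε/3) (by linarith)
  obtain ⟨δ₄, hδ₄, h₄⟩ := hcontq q δ₃ hδ₃
  refine ⟨min δ₁ (min δ₂ δ₄), lt_min hδ₁ (lt_min hδ₂ hδ₄), fun l hl => ?_⟩
  have hl1 : dist l l₀ < δ₁ := lt_of_lt_of_le hl (min_le_left _ _)
  have hl2 : dist l l₀ < δ₂ := lt_of_lt_of_le hl ((min_le_right _ _).trans (min_le_left _ _))
  have hl4 : dist l l₀ < δ₄ := lt_of_lt_of_le hl ((min_le_right _ _).trans (min_le_right _ _))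
  have hH := h₄ l hl4
  have hfinq := hfin l l₀ (q:ℝ)
  have hinvl : S l t (q:ℝ) '' A l (q:ℝ) = A l t := (hA l).2.1 t (q:ℝ) hqt
  have hinvl₀ : S l₀ t (q:ℝ) '' A l₀ (q:ℝ) = A l₀ t := (hA l₀).2.1 t (q:ℝ) hqt
  have hl₀K : A l₀ (q:ℝ) ⊆ K := hKl l₀ (by simpa using hδ₂)
  have main : hausdorffDist (A l t) (A l₀ t) ≤ 2*ε/3 := by
    apply Metric.hausdorffDist_le_of_mem_dist (by linarith)
    · intro x hx
      rw [← hinvl] at hx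
      obtain ⟨u, hu, rfl⟩ := hx
      obtain ⟨v, hv, huv⟩ := Metric.exists_dist_lt_of_hausdorffDist_lt hu hH hfinq
      refine ⟨S l₀ t (q:ℝ) v, hinvl₀ ▸ Set.mem_image_of_mem _ hv, ?_⟩
      have e1 : dist (S l t (q:ℝ) u) (S l₀ t (q:ℝ) u) < ε/3 := h₁ l hl1 u (hAD l (q:ℝ) hu)
      have e2 : dist (S l₀ t (q:ℝ) u) (S l₀ t (q:ℝ) v) < ε/3 :=
        h₃ u (hKl l hl2 hu) v (hl₀K hv) huv
      calc dist (S l t (q:ℝ) u) (S l₀ t (q:ℝ) v)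
          ≤ dist (S l t (q:ℝ) u) (S l₀ t (q:ℝ) u)
            + dist (S l₀ t (q:ℝ) u) (S l₀ t (q:ℝ) v) := dist_triangle _ _ _
        _ ≤ 2*ε/3 := by linarith
    · intro y hy
      rw [← hinvl₀] at hy
      obtain ⟨v, hv, rfl⟩ := hy
      obtain ⟨u, hu, huv⟩ := Metric.exists_dist_lt_of_hausdorffDist_lt' hv hH hfinq
      refine ⟨S l t (q:ℝ) u, hinvl ▸ Set.mem_image_of_mem _ hu, ?_⟩
      have e1 : dist (S l t (q:ℝ) u) (S l₀ t (q:ℝ) u) < ε/3 := h₁ l hl1 u (hAD l (q:ℝ) hu)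
      have e2 : dist (S l₀ t (q:ℝ) u) (S l₀ t (q:ℝ) v) < ε/3 :=
        h₃ u (hKl l hl2 hu) v (hl₀K hv) huv
      calc dist (S l₀ t (q:ℝ) v) (S l t (q:ℝ) u)
          ≤ dist (S l₀ t (q:ℝ) v) (S l₀ t (q:ℝ) u)
            + dist (S l₀ t (q:ℝ) u) (S l t (q:ℝ) u) := dist_triangle _ _ _
        _ ≤ 2*ε/3 := by
            rw [dist_comm (S l₀ t (q:ℝ) v) (S l₀ t (q:ℝ) u),
              dist_comm (S l₀ t (q:ℝ) u) (S l t (q:ℝ) u)]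
            linarith
  linarith
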